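/- Let E, F, G be Polish spaces. For each p ∈ ℕ let X_p, Y_p, Z_p be random elements of E, F, G respectively (possibly defined on different probability spaces), let X be a random element of E, and let g : E → F and h : E → G be Borel measurable maps. If (X_p, Y_p) converges in distribution to (X, g(X)) and (X_p, Z_p) converges in distribution to (X, h(X)), then the triple (X_p, Y_p, Z_p) converges in distribution to (X, g(X), h(X)). -/

import Mathlib

open MeasureTheory Filter
open scoped Topology
open Set Metric
open scoped ENNReal NNReal

/-- Auxiliary: choose a finite part of a countable measurable cover with small complement. -/
private lemma shrink_aux {E : Type*} [MeasurableSpace E]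
    (π : Measure E) [IsFiniteMeasure π] (s : ℕ → Set E)
    (hmeas : ∀ i, MeasurableSet (s i)) (hcov : ⋃ i, s i = univ)
    {c : ℝ≥0∞} (hc : 0 < c) :
    ∃ N : ℕ, π (⋃ i ∈ Finset.range N, s i)ᶜ ≤ c := by
  set T : ℕ → Set E := fun N => (⋃ i ∈ Finset.range N, s i)ᶜ with hT
  have hmono : Antitone T := by
    intro a b hab
    apply compl_subset_compl.2
    exact biUnion_subset_biUnion_left (fun i hi => Finset.mem_range.2
      (lt_of_lt_of_le (Finset.mem_range.1 hi) hab))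
  have hint : ⋂ N, T N = ∅ := by
    ext x
    simp only [mem_iInter, mem_empty_iff_false, iff_false, not_forall, hT, mem_compl_iff,
      not_not]
    have hx : x ∈ ⋃ i, s i := hcov ▸ mem_univ x
    obtain ⟨i, hi⟩ := mem_iUnion.1 hx
    exact ⟨i + 1, mem_biUnion (Finset.mem_range.2 (Nat.lt_succ_self i)) hi⟩
  have htend : Tendsto (π ∘ T) atTop (𝓝 (π (⋂ n, T n))) := by
    refine tendsto_measure_iInter_atTop (fun N => ?_) hmono ⟨0, measure_ne_top π _⟩
    exact ((MeasurableSet.biUnion (Finset.range N).countable_toSet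
      (fun i _ => hmeas i)).compl).nullMeasurableSet
  rw [hint, measure_empty] at htend
  obtain ⟨N, hN⟩ := (htend.eventually (gt_mem_nhds hc)).exists
  exact ⟨N, hN.le⟩

/-- Auxiliary: Ulam tightness of a finite measure on a complete second-countable metric space. -/
private lemma tight_aux {E : Type*} [MetricSpace E] [CompleteSpace E]
    [SecondCountableTopology E] [MeasurableSpace E] [OpensMeasurableSpace E]
    (π : Measure E) [IsFiniteMeasure π] {ε : ℝ≥0∞} (hε : ε ≠ 0) :
    ∃ K : Set E, IsCompact K ∧ π Kᶜ ≤ ε := by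
  rcases isEmpty_or_nonempty E with hE | hE
  · refine ⟨∅, isCompact_empty, ?_⟩
    rw [compl_empty, Set.univ_eq_empty_iff.2 hE, measure_empty]; exact zero_le
  obtain ⟨δ, hδ, hδs⟩ := ENNReal.exists_pos_sum_of_countable hε ℕ
  set u := TopologicalSpace.denseSeq E
  have hu : DenseRange u := TopologicalSpace.denseRange_denseSeq E
  have key : ∀ n : ℕ, ∃ N : ℕ,
      π (⋃ i ∈ Finset.range N, closedBall (u i) (1 / (n + 1)))ᶜ ≤ δ n := by
    intro n
    refine shrink_aux π _ (fun i => measurableSet_closedBall) ?_ (by exact_mod_cast hδ n)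
    ext x
    simp only [mem_iUnion, mem_univ, iff_true]
    obtain ⟨i, hi⟩ := hu.exists_dist_lt x (by positivity : (0:ℝ) < 1 / (n + 1))
    exact ⟨i, mem_closedBall.2 hi.le⟩
  choose N hN using key
  refine ⟨⋂ n, ⋃ i ∈ Finset.range (N n), closedBall (u i) (1 / (n + 1)), ?_, ?_⟩
  · refine TotallyBounded.isCompact_of_isClosed ?_ ?_
    · rw [totallyBounded_iff]
      intro e he
      obtain ⟨n, hn⟩ := exists_nat_one_div_lt he
      refine ⟨u '' (Finset.range (N n) : Set ℕ), ((Finset.range (N n)).finite_toSet.image u), ?_⟩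
      intro x hx
      have hx' : x ∈ ⋃ i ∈ Finset.range (N n), closedBall (u i) (1 / (n + 1)) :=
        mem_iInter.1 hx n
      obtain ⟨i, hi, hxi⟩ := mem_iUnion₂.1 hx'
      exact mem_iUnion₂.2 ⟨u i, mem_image_of_mem u hi, closedBall_subset_ball hn hxi⟩
    · exact isClosed_iInter fun n => isClosed_biUnion_finset fun i _ => Metric.isClosed_closedBall
  · rw [compl_iInter]
    refine le_trans (measure_iUnion_le _) (le_trans (ENNReal.tsum_le_tsum hN) hδs.le)

/-- Auxiliary: **Lusin's theorem** on a complete second-countable metric space: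
a Borel measurable function into a second-countable metric space is continuous on a compact
set of almost full measure. -/
private lemma lusin_aux {E F : Type*} [MetricSpace E] [CompleteSpace E]
    [SecondCountableTopology E] [MeasurableSpace E] [BorelSpace E]
    [MetricSpace F] [SecondCountableTopology F] [MeasurableSpace F] [BorelSpace F]
    (π : Measure E) [IsFiniteMeasure π] {g : E → F} (hg : Measurable g)
    {ε : ℝ≥0∞} (hε : ε ≠ 0) :
    ∃ K : Set E, IsCompact K ∧ π Kᶜ ≤ ε ∧ ContinuousOn g K := by
  rcases isEmpty_or_nonempty E with hE | hE
  · refine ⟨∅, isCompact_empty, ?_, continuousOn_empty g⟩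
    rw [compl_empty, Set.univ_eq_empty_iff.2 hE, measure_empty]; exact zero_le
  have hF : Nonempty F := ⟨g hE.some⟩
  have hhalf : (ε / 2) ≠ 0 := by simp [ENNReal.div_eq_zero_iff, hε]
  have hquarter : (ε / 2 / 2) ≠ 0 := by simp [ENNReal.div_eq_zero_iff, hhalf]
  obtain ⟨K₀, hK₀c, hK₀⟩ := tight_aux π hhalf
  obtain ⟨δ, hδpos, hδs⟩ := ENNReal.exists_pos_sum_of_countable hquarter ℕ
  obtain ⟨η, hηpos, hηs⟩ := ENNReal.exists_pos_sum_of_countable hquarter (ℕ × ℕ)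
  set v := TopologicalSpace.denseSeq F
  have hv : DenseRange v := TopologicalSpace.denseRange_denseSeq F
  set A : ℕ → ℕ → Set E := fun n i => g ⁻¹' ball (v i) (1 / (n + 1)) with hA
  have hAmeas : ∀ n i, MeasurableSet (A n i) := fun n i => hg measurableSet_ball
  have hAcov : ∀ n, ⋃ i, A n i = univ := by
    intro n
    ext x
    simp only [mem_iUnion, mem_univ, iff_true]
    obtain ⟨i, hi⟩ := hv.exists_dist_lt (g x) (by positivity : (0:ℝ) < 1 / (n + 1))
    exact ⟨i, by simpa [hA, mem_ball] using hi⟩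
  have key : ∀ n : ℕ, ∃ N : ℕ, π (⋃ i ∈ Finset.range N, A n i)ᶜ ≤ δ n := fun n =>
    shrink_aux π _ (hAmeas n) (hAcov n) (by exact_mod_cast hδpos n)
  choose N hN using key
  have key2 : ∀ n i, ∃ Cs ⊆ A n i, IsClosed Cs ∧ π (A n i \ Cs) ≤ η (n, i) := by
    intro n i
    obtain ⟨Cs, h1, h2, h3⟩ := (hAmeas n i).exists_isClosed_diff_lt (measure_ne_top π _)
      (by exact_mod_cast (hηpos (n, i)).ne' : (↑(η (n, i)) : ℝ≥0∞) ≠ 0)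
    exact ⟨Cs, h1, h2, h3.le⟩
  choose C hCsub hCcl hCsmall using key2
  set L : ℕ → Set E := fun n => ⋃ i ∈ Finset.range (N n), C n i with hL
  have hLclosed : ∀ n, IsClosed (L n) := fun n =>
    isClosed_biUnion_finset fun i _ => hCcl n i
  have hLcompl : ∀ n, π (L n)ᶜ ≤ δ n + ∑ i ∈ Finset.range (N n), (η (n, i) : ℝ≥0∞) := by
    intro n
    have hsub : (L n)ᶜ ⊆ (⋃ i ∈ Finset.range (N n), A n i)ᶜ ∪
        ⋃ i ∈ Finset.range (N n), (A n i \ C n i) := by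
      intro x hx
      by_cases hxT : x ∈ ⋃ i ∈ Finset.range (N n), A n i
      · obtain ⟨i, hi, hxi⟩ := mem_iUnion₂.1 hxT
        refine Or.inr (mem_iUnion₂.2 ⟨i, hi, hxi, fun hxC => ?_⟩)
        exact hx (mem_iUnion₂.2 ⟨i, hi, hxC⟩)
      · exact Or.inl hxT
    refine le_trans (measure_mono hsub) (le_trans (measure_union_le _ _) ?_)
    exact add_le_add (hN n) (le_trans (measure_biUnion_finset_le _ _)
      (Finset.sum_le_sum fun i _ => hCsmall n i))
  refine ⟨K₀ ∩ ⋂ n, L n, hK₀c.inter_right (isClosed_iInter hLclosed), ?_, ?_⟩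
  · rw [compl_inter, compl_iInter]
    refine le_trans (measure_union_le _ _) ?_
    have h2 : π (⋃ n, (L n)ᶜ) ≤ ε / 2 := by
      refine le_trans (measure_iUnion_le _) (le_trans (ENNReal.tsum_le_tsum hLcompl) ?_)
      rw [ENNReal.tsum_add]
      have h3 : ∑' n, ∑ i ∈ Finset.range (N n), (η (n, i) : ℝ≥0∞) ≤
          ∑' (p : ℕ × ℕ), (η p : ℝ≥0∞) := by
        calc ∑' n, ∑ i ∈ Finset.range (N n), (η (n, i) : ℝ≥0∞)
            ≤ ∑' (n : ℕ) (i : ℕ), (η (n, i) : ℝ≥0∞) :=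
              ENNReal.tsum_le_tsum fun n => ENNReal.sum_le_tsum _
          _ = ∑' (p : ℕ × ℕ), (η (p.1, p.2) : ℝ≥0∞) := ENNReal.tsum_prod.symm
          _ = ∑' (p : ℕ × ℕ), (η p : ℝ≥0∞) := by simp
      calc (∑' n, (δ n : ℝ≥0∞)) + ∑' n, ∑ i ∈ Finset.range (N n), (η (n, i) : ℝ≥0∞)
          ≤ ε / 2 / 2 + ε / 2 / 2 := add_le_add hδs.le (le_trans h3 hηs.le)
        _ = ε / 2 := ENNReal.add_halves _
    calc π K₀ᶜ + π (⋃ n, (L n)ᶜ) ≤ ε / 2 + ε / 2 := add_le_add hK₀ h2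
      _ = ε := ENNReal.add_halves _
  · rw [Metric.continuousOn_iff]
    intro x hx e he
    obtain ⟨n, hn⟩ := exists_nat_one_div_lt (by positivity : (0:ℝ) < e / 2)
    have hxL : x ∈ L n := (mem_iInter.1 hx.2) n
    classical
    obtain ⟨i₀, hi₀, hxi₀⟩ := mem_iUnion₂.1 hxL
    set U : Set E := (⋃ i ∈ (Finset.range (N n)).filter (fun i => x ∉ C n i), C n i)ᶜ with hU
    have hUopen : IsOpen U := (isClosed_biUnion_finset fun i _ => hCcl n i).isOpen_compl
    have hxU : x ∈ U := by
      intro hmem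
      obtain ⟨i, hi, hxi⟩ := mem_iUnion₂.1 hmem
      exact (Finset.mem_filter.1 hi).2 hxi
    obtain ⟨d, hd, hball⟩ := Metric.isOpen_iff.1 hUopen x hxU
    refine ⟨d, hd, fun y hy hdy => ?_⟩
    have hyU : y ∈ U := hball hdy
    have hyL : y ∈ L n := (mem_iInter.1 hy.2) n
    obtain ⟨i, hi, hyi⟩ := mem_iUnion₂.1 hyL
    have hxCi : x ∈ C n i := by
      by_contra hxc
      exact hyU (mem_iUnion₂.2 ⟨i, Finset.mem_filter.2 ⟨hi, hxc⟩, hyi⟩)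
    have hgx : g x ∈ ball (v i) (1 / (n + 1)) := hCsub n i hxCi
    have hgy : g y ∈ ball (v i) (1 / (n + 1)) := hCsub n i hyi
    calc dist (g y) (g x) ≤ dist (g y) (v i) + dist (v i) (g x) := dist_triangle _ _ _
      _ < 1 / (n + 1) + 1 / (n + 1) := by
          rw [dist_comm (v i) (g x)]
          exact add_lt_add (mem_ball.1 hgy) (mem_ball.1 hgx)
      _ < e / 2 + e / 2 := add_lt_add hn hn
      _ = e := add_halves e

/-- Auxiliary: subadditivity of `limsup` for `ℝ≥0∞`-valued sequences. -/
private lemma limsup_add_le_aux (u v : ℕ → ℝ≥0∞) :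
    atTop.limsup (fun n => u n + v n) ≤ atTop.limsup u + atTop.limsup v := by
  by_cases hu : atTop.limsup u = ⊤
  · rw [hu, top_add]; exact le_top
  by_cases hv : atTop.limsup v = ⊤
  · rw [hv, add_top]; exact le_top
  refine ENNReal.le_of_forall_pos_le_add fun ε hε hfin => ?_
  have hε2 : ((ε : ℝ≥0∞) / 2) ≠ 0 := by
    simp [ENNReal.div_eq_zero_iff, hε.ne']
  have h1 : ∀ᶠ n in atTop, u n < atTop.limsup u + (ε : ℝ≥0∞) / 2 :=
    eventually_lt_of_limsup_lt (ENNReal.lt_add_right hu hε2)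
  have h2 : ∀ᶠ n in atTop, v n < atTop.limsup v + (ε : ℝ≥0∞) / 2 :=
    eventually_lt_of_limsup_lt (ENNReal.lt_add_right hv hε2)
  have h3 : ∀ᶠ n in atTop, u n + v n ≤
      atTop.limsup u + atTop.limsup v + (ε : ℝ≥0∞) := by
    filter_upwards [h1, h2] with n hn1 hn2
    calc u n + v n ≤ (atTop.limsup u + (ε : ℝ≥0∞) / 2) + (atTop.limsup v + (ε : ℝ≥0∞) / 2) :=
          add_le_add hn1.le hn2.le
      _ = atTop.limsup u + atTop.limsup v + ((ε : ℝ≥0∞) / 2 + (ε : ℝ≥0∞) / 2) := by ring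
      _ = atTop.limsup u + atTop.limsup v + (ε : ℝ≥0∞) := by rw [ENNReal.add_halves]
  exact limsup_le_of_le (by isBoundedDefault) h3

/-- Auxiliary: the set of pairs `(x, y)` such that `x` is `r`-close to a point `x'` of a
compact set `K` on which `g` is continuous while `y` is `δ`-far from `g x'` is closed. -/
private lemma isClosed_bad_aux {E F : Type*} [MetricSpace E] [MetricSpace F]
    {K : Set E} (hK : IsCompact K) {g : E → F} (hg : ContinuousOn g K) (r δ : ℝ) :
    IsClosed {q : E × F | ∃ x' ∈ K, dist q.1 x' ≤ r ∧ δ ≤ dist q.2 (g x')} := by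
  apply IsSeqClosed.isClosed
  intro q q₀ hq hq₀
  choose x hxK hx1 hx2 using hq
  obtain ⟨x₀, hx₀K, φ, hφ, hφt⟩ := hK.tendsto_subseq hxK
  have hqφ : Tendsto (fun n => q (φ n)) atTop (𝓝 q₀) := hq₀.comp hφ.tendsto_atTop
  have hfst : Tendsto (fun n => (q (φ n)).1) atTop (𝓝 q₀.1) :=
    (continuous_fst.tendsto q₀).comp hqφ
  have hsnd : Tendsto (fun n => (q (φ n)).2) atTop (𝓝 q₀.2) :=
    (continuous_snd.tendsto q₀).comp hqφ
  have hgx : Tendsto (fun n => g (x (φ n))) atTop (𝓝 (g x₀)) := by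
    refine (hg x₀ hx₀K).tendsto.comp (tendsto_nhdsWithin_iff.2 ⟨hφt, ?_⟩)
    exact Eventually.of_forall fun n => hxK (φ n)
  refine ⟨x₀, hx₀K, ?_, ?_⟩
  · exact le_of_tendsto (hfst.dist hφt) (Eventually.of_forall fun n => hx1 (φ n))
  · exact ge_of_tendsto (hsnd.dist hgx) (Eventually.of_forall fun n => hx2 (φ n))

/-- **Joint convergence in distribution from pairwise convergence towards measurable
functions of a common limit** (Statement 10).
Let `E, F, G` be Polish spaces, `(X p, Y p, Z p)` random elements of `E × F × G`
defined on (possibly different) probability spaces `(Ω p, μ p)`, `X'` a random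
element of `E` on `(Ω', μ')`, and `g : E → F`, `h : E → G` Borel measurable.
If `(X p, Y p) ⇒ (X', g X')` and `(X p, Z p) ⇒ (X', h X')` in distribution, then
`(X p, Y p, Z p) ⇒ (X', g X', h X')` in distribution.  Convergence in
distribution is expressed via bounded continuous test functions. -/
theorem joint_convergence_of_pairwise
    {E F G : Type*}
    [TopologicalSpace E] [PolishSpace E] [MeasurableSpace E] [BorelSpace E]
    [TopologicalSpace F] [PolishSpace F] [MeasurableSpace F] [BorelSpace F]
    [TopologicalSpace G] [PolishSpace G] [MeasurableSpace G] [BorelSpace G]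
    (Ω : ℕ → Type*) [∀ p, MeasurableSpace (Ω p)]
    (μ : ∀ p, Measure (Ω p)) [∀ p, IsProbabilityMeasure (μ p)]
    {Ω' : Type*} [MeasurableSpace Ω'] (μ' : Measure Ω') [IsProbabilityMeasure μ']
    (X : ∀ p, Ω p → E) (Y : ∀ p, Ω p → F) (Z : ∀ p, Ω p → G) (X' : Ω' → E)
    (hX : ∀ p, Measurable (X p)) (hY : ∀ p, Measurable (Y p))
    (hZ : ∀ p, Measurable (Z p)) (hX' : Measurable X')
    (g : E → F) (h : E → G) (hg : Measurable g) (hh : Measurable h)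
    (hXY : ∀ f : BoundedContinuousFunction (E × F) ℝ,
      Tendsto (fun p => ∫ x, f (X p x, Y p x) ∂(μ p)) atTop
        (𝓝 (∫ x, f (X' x, g (X' x)) ∂μ')))
    (hXZ : ∀ f : BoundedContinuousFunction (E × G) ℝ,
      Tendsto (fun p => ∫ x, f (X p x, Z p x) ∂(μ p)) atTop
        (𝓝 (∫ x, f (X' x, h (X' x)) ∂μ'))) :
    ∀ f : BoundedContinuousFunction (E × F × G) ℝ,
      Tendsto (fun p => ∫ x, f (X p x, Y p x, Z p x) ∂(μ p)) atTop
        (𝓝 (∫ x, f (X' x, g (X' x), h (X' x)) ∂μ')) := by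
  letI := TopologicalSpace.upgradeIsCompletelyMetrizable E
  letI := TopologicalSpace.upgradeIsCompletelyMetrizable F
  letI := TopologicalSpace.upgradeIsCompletelyMetrizable G
  -- measurability of the various pair/triple maps
  have mXY : ∀ p, Measurable (fun ω => (X p ω, Y p ω)) := fun p => (hX p).prodMk (hY p)
  have mXZ : ∀ p, Measurable (fun ω => (X p ω, Z p ω)) := fun p => (hX p).prodMk (hZ p)
  have mT : ∀ p, Measurable (fun ω => (X p ω, Y p ω, Z p ω)) :=
    fun p => (hX p).prodMk ((hY p).prodMk (hZ p))
  have mXY' : Measurable (fun ω => (X' ω, g (X' ω))) := hX'.prodMk (hg.comp hX')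
  have mXZ' : Measurable (fun ω => (X' ω, h (X' ω))) := hX'.prodMk (hh.comp hX')
  have mT' : Measurable (fun ω => (X' ω, g (X' ω), h (X' ω))) :=
    hX'.prodMk ((hg.comp hX').prodMk (hh.comp hX'))
  -- bundled pushforward probability measures
  haveI hPXYi : ∀ p, IsProbabilityMeasure ((μ p).map (fun ω => (X p ω, Y p ω))) :=
    fun p => Measure.isProbabilityMeasure_map (mXY p).aemeasurable
  haveI hPXZi : ∀ p, IsProbabilityMeasure ((μ p).map (fun ω => (X p ω, Z p ω))) :=
    fun p => Measure.isProbabilityMeasure_map (mXZ p).aemeasurable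
  haveI hPTi : ∀ p, IsProbabilityMeasure ((μ p).map (fun ω => (X p ω, Y p ω, Z p ω))) :=
    fun p => Measure.isProbabilityMeasure_map (mT p).aemeasurable
  haveI hQXYi : IsProbabilityMeasure (μ'.map (fun ω => (X' ω, g (X' ω)))) :=
    Measure.isProbabilityMeasure_map mXY'.aemeasurable
  haveI hQXZi : IsProbabilityMeasure (μ'.map (fun ω => (X' ω, h (X' ω)))) :=
    Measure.isProbabilityMeasure_map mXZ'.aemeasurable
  haveI hQTi : IsProbabilityMeasure (μ'.map (fun ω => (X' ω, g (X' ω), h (X' ω)))) :=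
    Measure.isProbabilityMeasure_map mT'.aemeasurable
  set PXY : ℕ → ProbabilityMeasure (E × F) :=
    fun p => ⟨(μ p).map (fun ω => (X p ω, Y p ω)), hPXYi p⟩ with hPXY
  set PXZ : ℕ → ProbabilityMeasure (E × G) :=
    fun p => ⟨(μ p).map (fun ω => (X p ω, Z p ω)), hPXZi p⟩ with hPXZ
  set PT : ℕ → ProbabilityMeasure (E × F × G) :=
    fun p => ⟨(μ p).map (fun ω => (X p ω, Y p ω, Z p ω)), hPTi p⟩ with hPT
  set QXY : ProbabilityMeasure (E × F) := ⟨μ'.map (fun ω => (X' ω, g (X' ω))), hQXYi⟩ with hQXY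
  set QXZ : ProbabilityMeasure (E × G) := ⟨μ'.map (fun ω => (X' ω, h (X' ω))), hQXZi⟩ with hQXZ
  set QT : ProbabilityMeasure (E × F × G) :=
    ⟨μ'.map (fun ω => (X' ω, g (X' ω), h (X' ω))), hQTi⟩ with hQT
  -- the hypotheses give weak convergence of the pair laws
  have tXY : Tendsto PXY atTop (𝓝 QXY) := by
    rw [ProbabilityMeasure.tendsto_iff_forall_integral_tendsto]
    intro f
    have e1 : ∀ p, ∫ q, f q ∂((PXY p : Measure (E × F))) = ∫ ω, f (X p ω, Y p ω) ∂(μ p) :=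
      fun p => integral_map (mXY p).aemeasurable f.continuous.aestronglyMeasurable
    have e2 : ∫ q, f q ∂((QXY : Measure (E × F))) = ∫ ω, f (X' ω, g (X' ω)) ∂μ' :=
      integral_map mXY'.aemeasurable f.continuous.aestronglyMeasurable
    simp only [e1, e2]
    exact hXY f
  have tXZ : Tendsto PXZ atTop (𝓝 QXZ) := by
    rw [ProbabilityMeasure.tendsto_iff_forall_integral_tendsto]
    intro f
    have e1 : ∀ p, ∫ q, f q ∂((PXZ p : Measure (E × G))) = ∫ ω, f (X p ω, Z p ω) ∂(μ p) :=
      fun p => integral_map (mXZ p).aemeasurable f.continuous.aestronglyMeasurable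
    have e2 : ∫ q, f q ∂((QXZ : Measure (E × G))) = ∫ ω, f (X' ω, h (X' ω)) ∂μ' :=
      integral_map mXZ'.aemeasurable f.continuous.aestronglyMeasurable
    simp only [e1, e2]
    exact hXZ f
  -- main step : limsup on closed sets for the triple laws
  have hclosed : ∀ C : Set (E × F × G), IsClosed C →
      atTop.limsup (fun p => (PT p : Measure (E × F × G)) C) ≤ (QT : Measure (E × F × G)) C := by
    intro C hC
    set ν : Measure (E × F × G) := (QT : Measure (E × F × G)) with hν
    set π : Measure E := μ'.map X' with hπ
    haveI : IsProbabilityMeasure π := Measure.isProbabilityMeasure_map hX'.aemeasurable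
    refine ENNReal.le_of_forall_pos_le_add fun ε0 hε0 hfin => ?_
    set ε : ℝ≥0∞ := (ε0 : ℝ≥0∞) / 5 with hεdef
    have hε : ε ≠ 0 := by
      simp only [hεdef, ne_eq, ENNReal.div_eq_zero_iff, ENNReal.coe_eq_zero]
      push_neg
      exact ⟨by exact_mod_cast hε0.ne', by norm_num⟩
    -- choose the thickening radius δ
    obtain ⟨δ, hδpos, hδth⟩ : ∃ δ : ℝ, 0 < δ ∧ ν (cthickening (δ + δ) C) ≤ ν C + ε := by
      have ht : Tendsto (fun s : ℝ => ν (cthickening s C)) (𝓝 0) (𝓝 (ν C)) :=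
        tendsto_measure_cthickening_of_isClosed ⟨1, one_pos, measure_ne_top _ _⟩ hC
      have hlt : ν C < ν C + ε := ENNReal.lt_add_right (measure_ne_top _ _) hε
      have hev : ∀ᶠ s : ℝ in 𝓝 (0:ℝ), ν (cthickening s C) < ν C + ε :=
        ht.eventually (gt_mem_nhds hlt)
      have hev2 : ∀ᶠ s : ℝ in 𝓝[>] (0:ℝ), ν (cthickening s C) < ν C + ε ∧ 0 < s :=
        (hev.filter_mono nhdsWithin_le_nhds).and eventually_mem_nhdsWithin
      obtain ⟨s, hs1, hs2⟩ := hev2.exists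
      refine ⟨s / 2, by linarith, ?_⟩
      rw [show s / 2 + s / 2 = s by ring]
      exact hs1.le
    -- Lusin's theorem for the pair (g, h)
    obtain ⟨K, hKcomp, hKm, hKcont⟩ := lusin_aux π (hg.prodMk hh) hε
    have hgK : ContinuousOn g K := continuous_fst.comp_continuousOn hKcont
    have hhK : ContinuousOn h K := continuous_snd.comp_continuousOn hKcont
    -- a uniform continuity radius
    obtain ⟨r₀, hr₀pos, hr₀⟩ := Metric.uniformContinuousOn_iff_le.1
      (hKcomp.uniformContinuousOn_of_continuous hKcont) (δ / 2) (by positivity)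
    set r : ℝ := min r₀ δ with hrdef
    have hrpos : 0 < r := lt_min hr₀pos hδpos
    have hrδ : r ≤ δ := min_le_right _ _
    have huc : ∀ x ∈ K, ∀ y ∈ K, dist x y ≤ r →
        dist (g x) (g y) ≤ δ / 2 ∧ dist (h x) (h y) ≤ δ / 2 := by
      intro x hx y hy hd
      have h2 := hr₀ x hx y hy (hd.trans (min_le_left _ _))
      rw [Prod.dist_eq] at h2
      exact ⟨le_trans le_sup_left h2, le_trans le_sup_right h2⟩
    -- the bad sets
    set B : Set (E × F) := {q | ∃ x' ∈ K, dist q.1 x' ≤ r ∧ δ ≤ dist q.2 (g x')} with hBdef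
    set B' : Set (E × G) := {q | ∃ x' ∈ K, dist q.1 x' ≤ r ∧ δ ≤ dist q.2 (h x')} with hB'def
    have hBclosed : IsClosed B := isClosed_bad_aux hKcomp hgK r δ
    have hB'closed : IsClosed B' := isClosed_bad_aux hKcomp hhK r δ
    set Γ : Set E := K ∩ (fun x => (x, g x, h x)) ⁻¹' (cthickening δ C) with hΓdef
    have hΓclosed : IsClosed Γ :=
      ContinuousOn.preimage_isClosed_of_isClosed
        (continuousOn_id.prodMk hKcont) hKcomp.isClosed isClosed_cthickening
    have hΓcomp : IsCompact Γ := hKcomp.of_isClosed_subset hΓclosed inter_subset_left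
    set Θ : Set E := cthickening r Γ with hΘdef
    have hΘclosed : IsClosed Θ := isClosed_cthickening
    set D : Set E := (thickening r K)ᶜ with hDdef
    have hDclosed : IsClosed D := isOpen_thickening.isClosed_compl
    set W : Set E := Θ ∪ D with hWdef
    have hWclosed : IsClosed W := hΘclosed.union hDclosed
    -- pointwise inclusion of events
    have hsub : ∀ p, (fun ω => (X p ω, Y p ω, Z p ω)) ⁻¹' C ⊆
        (((fun ω => (X p ω, Y p ω)) ⁻¹' B) ∪ ((fun ω => (X p ω, Z p ω)) ⁻¹' B'))
          ∪ ((fun ω => (X p ω, Y p ω)) ⁻¹' (W ×ˢ (univ : Set F))) := by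
      intro p ω hω
      by_cases hD : X p ω ∈ D
      · exact Or.inr (Set.mem_prod.2 ⟨Or.inr hD, mem_univ _⟩)
      · have hth : X p ω ∈ thickening r K := not_not.1 hD
        obtain ⟨x', hx'K, hx'd⟩ := mem_thickening_iff.1 hth
        by_cases hB1 : (X p ω, Y p ω) ∈ B
        · exact Or.inl (Or.inl hB1)
        by_cases hB2 : (X p ω, Z p ω) ∈ B'
        · exact Or.inl (Or.inr hB2)
        have hY' : dist (Y p ω) (g x') < δ := by
          by_contra hcon
          exact hB1 ⟨x', hx'K, hx'd.le, not_lt.1 hcon⟩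
        have hZ' : dist (Z p ω) (h x') < δ := by
          by_contra hcon
          exact hB2 ⟨x', hx'K, hx'd.le, not_lt.1 hcon⟩
        refine Or.inr (Set.mem_prod.2 ⟨Or.inl ?_, mem_univ _⟩)
        have hx'Γ : x' ∈ Γ := by
          refine ⟨hx'K, ?_⟩
          refine mem_cthickening_of_dist_le _ _ δ C hω ?_
          rw [Prod.dist_eq, Prod.dist_eq]
          refine sup_le (by rw [dist_comm]; exact hx'd.le.trans hrδ) (sup_le ?_ ?_)
          · rw [dist_comm]; exact hY'.le
          · rw [dist_comm]; exact hZ'.le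
        exact mem_cthickening_of_dist_le (X p ω) x' r Γ hx'Γ hx'd.le
    -- measure bound for each p
    have hmb : ∀ p, (PT p : Measure (E × F × G)) C ≤
        ((PXY p : Measure (E × F)) B + (PXZ p : Measure (E × G)) B') +
        (PXY p : Measure (E × F)) (W ×ˢ (univ : Set F)) := by
      intro p
      have h1 : (PT p : Measure (E × F × G)) C =
          (μ p) ((fun ω => (X p ω, Y p ω, Z p ω)) ⁻¹' C) :=
        Measure.map_apply (mT p) hC.measurableSet
      have h2 : (PXY p : Measure (E × F)) B = (μ p) ((fun ω => (X p ω, Y p ω)) ⁻¹' B) :=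
        Measure.map_apply (mXY p) hBclosed.measurableSet
      have h3 : (PXZ p : Measure (E × G)) B' = (μ p) ((fun ω => (X p ω, Z p ω)) ⁻¹' B') :=
        Measure.map_apply (mXZ p) hB'closed.measurableSet
      have h4 : (PXY p : Measure (E × F)) (W ×ˢ (univ : Set F)) =
          (μ p) ((fun ω => (X p ω, Y p ω)) ⁻¹' (W ×ˢ (univ : Set F))) :=
        Measure.map_apply (mXY p) (hWclosed.prod isClosed_univ).measurableSet
      rw [h1, h2, h3, h4]
      exact le_trans (measure_mono (hsub p))
        (le_trans (measure_union_le _ _) (add_le_add_left (measure_union_le _ _) _))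
    -- portmanteau bounds for the three limsups
    have l1 : atTop.limsup (fun p => (PXY p : Measure (E × F)) B) ≤ ε := by
      refine le_trans (ProbabilityMeasure.limsup_measure_closed_le_of_tendsto tXY hBclosed) ?_
      have hQB : (QXY : Measure (E × F)) B ≤ π Kᶜ := by
        rw [show (QXY : Measure (E × F)) = μ'.map (fun ω => (X' ω, g (X' ω))) from rfl,
          Measure.map_apply mXY' hBclosed.measurableSet, hπ,
          Measure.map_apply hX' hKcomp.isClosed.measurableSet.compl]
        refine measure_mono ?_
        rintro ω ⟨x', hx'K, hd, hfar⟩ hX'K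
        have := (huc _ hX'K _ hx'K hd).1
        have : δ ≤ δ / 2 := le_trans hfar this
        linarith
      exact le_trans hQB hKm
    have l2 : atTop.limsup (fun p => (PXZ p : Measure (E × G)) B') ≤ ε := by
      refine le_trans (ProbabilityMeasure.limsup_measure_closed_le_of_tendsto tXZ hB'closed) ?_
      have hQB : (QXZ : Measure (E × G)) B' ≤ π Kᶜ := by
        rw [show (QXZ : Measure (E × G)) = μ'.map (fun ω => (X' ω, h (X' ω))) from rfl,
          Measure.map_apply mXZ' hB'closed.measurableSet, hπ,
          Measure.map_apply hX' hKcomp.isClosed.measurableSet.compl]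
        refine measure_mono ?_
        rintro ω ⟨x', hx'K, hd, hfar⟩ hX'K
        have := (huc _ hX'K _ hx'K hd).2
        have : δ ≤ δ / 2 := le_trans hfar this
        linarith
      exact le_trans hQB hKm
    have l3 : atTop.limsup (fun p => (PXY p : Measure (E × F)) (W ×ˢ (univ : Set F))) ≤
        ε + (ν C + ε) + ε := by
      refine le_trans (ProbabilityMeasure.limsup_measure_closed_le_of_tendsto tXY
        (hWclosed.prod isClosed_univ)) ?_
      have hQW : (QXY : Measure (E × F)) (W ×ˢ (univ : Set F)) = π W := by
        rw [show (QXY : Measure (E × F)) = μ'.map (fun ω => (X' ω, g (X' ω))) from rfl,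
          Measure.map_apply mXY' (hWclosed.prod isClosed_univ).measurableSet, hπ,
          Measure.map_apply hX' hWclosed.measurableSet]
        congr 1
        ext ω
        simp [Set.mem_prod]
      rw [hQW]
      have hD2 : π D ≤ ε :=
        le_trans (measure_mono (compl_subset_compl.2 (self_subset_thickening hrpos K))) hKm
      have hKΘ : π (K ∩ Θ) ≤ ν C + ε := by
        rcases eq_empty_or_nonempty Γ with hΓe | hΓne
        · have hΘe : Θ = ∅ := by rw [hΘdef, hΓe, cthickening_empty]
          rw [hΘe, inter_empty, measure_empty]
          exact zero_le
        · have hsub2 : K ∩ Θ ⊆ (fun x => (x, g x, h x)) ⁻¹' (cthickening (δ + δ) C) := by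
            rintro x ⟨hxK, hxΘ⟩
            rw [hΘdef, hΓcomp.cthickening_eq_biUnion_closedBall hrpos.le] at hxΘ
            obtain ⟨x', hx'Γ, hxx'⟩ := mem_iUnion₂.1 hxΘ
            have hx'K : x' ∈ K := hx'Γ.1
            have hd : dist x x' ≤ r := mem_closedBall.1 hxx'
            have hucx := huc x hxK x' hx'K hd
            have hdist : dist ((x, g x, h x) : E × F × G) (x', g x', h x') ≤ δ := by
              rw [Prod.dist_eq, Prod.dist_eq]
              exact sup_le (hd.trans hrδ)
                (sup_le (hucx.1.trans (by linarith)) (hucx.2.trans (by linarith)))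
            have hmem2 : ((x, g x, h x) : E × F × G) ∈ cthickening δ (cthickening δ C) :=
              mem_cthickening_of_dist_le _ _ δ _ hx'Γ.2 hdist
            exact cthickening_cthickening_subset hδpos.le hδpos.le C hmem2
          have hid : π ((fun x => (x, g x, h x)) ⁻¹' (cthickening (δ + δ) C)) =
              ν (cthickening (δ + δ) C) := by
            rw [hπ, Measure.map_apply hX'
                ((show Measurable (fun x : E => (x, g x, h x)) from
                  measurable_id.prodMk (hg.prodMk hh)) isClosed_cthickening.measurableSet),
              hν, show (QT : Measure (E × F × G)) =
                μ'.map (fun ω => (X' ω, g (X' ω), h (X' ω))) from rfl,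
              Measure.map_apply mT' isClosed_cthickening.measurableSet]
            rfl
          exact le_trans (measure_mono hsub2) (le_trans hid.le hδth)
      have hΘb : π Θ ≤ ε + (ν C + ε) := by
        have hsplit : Θ ⊆ Kᶜ ∪ (K ∩ Θ) := by
          intro x hx
          by_cases hxK : x ∈ K
          · exact Or.inr ⟨hxK, hx⟩
          · exact Or.inl hxK
        exact le_trans (measure_mono hsplit)
          (le_trans (measure_union_le _ _) (add_le_add hKm hKΘ))
      calc π W ≤ π Θ + π D := measure_union_le _ _
        _ ≤ (ε + (ν C + ε)) + ε := add_le_add hΘb hD2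
        _ = ε + (ν C + ε) + ε := rfl
    -- assemble
    calc atTop.limsup (fun p => (PT p : Measure (E × F × G)) C)
        ≤ atTop.limsup (fun p =>
            ((PXY p : Measure (E × F)) B + (PXZ p : Measure (E × G)) B') +
            (PXY p : Measure (E × F)) (W ×ˢ (univ : Set F))) :=
          limsup_le_limsup (Eventually.of_forall hmb)
      _ ≤ atTop.limsup (fun p =>
            (PXY p : Measure (E × F)) B + (PXZ p : Measure (E × G)) B') +
            atTop.limsup (fun p => (PXY p : Measure (E × F)) (W ×ˢ (univ : Set F))) :=
          limsup_add_le_aux _ _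
      _ ≤ (atTop.limsup (fun p => (PXY p : Measure (E × F)) B) +
            atTop.limsup (fun p => (PXZ p : Measure (E × G)) B')) + (ε + (ν C + ε) + ε) :=
          add_le_add (limsup_add_le_aux _ _) l3
      _ ≤ (ε + ε) + (ε + (ν C + ε) + ε) := add_le_add (add_le_add l1 l2) le_rfl
      _ = ν C + 5 * ε := by ring
      _ = ν C + ε0 := by
          rw [hεdef, ENNReal.mul_div_cancel' (by norm_num) (by norm_num)]
  -- conclude weak convergence of the triple laws
  have tT : Tendsto PT atTop (𝓝 QT) := by
    apply tendsto_of_forall_isOpen_le_liminf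
    intro Gs hGs
    have hlim8 : (QT : Measure (E × F × G)) Gs ≤
        atTop.liminf (fun p => (PT p : Measure (E × F × G)) Gs) :=
      le_measure_liminf_of_limsup_measure_compl_le hGs.measurableSet
        (hclosed _ hGs.isClosed_compl)
    have aux : ENNReal.ofNNReal (atTop.liminf fun i => PT i Gs) =
        atTop.liminf (ENNReal.ofNNReal ∘ fun i => PT i Gs) := by
      refine Monotone.map_liminf_of_continuousAt ENNReal.coe_mono (fun i => PT i Gs) ?_ ?_ ?_
      · exact ENNReal.continuous_coe.continuousAt
      · exact IsBoundedUnder.isCoboundedUnder_ge ⟨1, by simp⟩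
      · exact ⟨0, by simp⟩
    have hcomp : (ENNReal.ofNNReal ∘ fun i => PT i Gs) =
        fun p => (PT p : Measure (E × F × G)) Gs := by
      funext p; exact ProbabilityMeasure.ennreal_coeFn_eq_coeFn_toMeasure _ _
    rw [← ENNReal.coe_le_coe, aux, hcomp, ProbabilityMeasure.ennreal_coeFn_eq_coeFn_toMeasure]
    exact hlim8
  -- translate back into convergence of integrals
  intro f
  have e1 : ∀ p, ∫ q, f q ∂((PT p : Measure (E × F × G))) =
      ∫ ω, f (X p ω, Y p ω, Z p ω) ∂(μ p) :=
    fun p => integral_map (mT p).aemeasurable f.continuous.aestronglyMeasurable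
  have e2 : ∫ q, f q ∂((QT : Measure (E × F × G))) = ∫ ω, f (X' ω, g (X' ω), h (X' ω)) ∂μ' :=
    integral_map mT'.aemeasurable f.continuous.aestronglyMeasurable
  have := ProbabilityMeasure.tendsto_iff_forall_integral_tendsto.1 tT f
  simp only [e1, e2] at this
  exact this
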